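/- Let $\varphi(t)$ and $\psi(t)$ be nonnegative functions on $[0,T]$ with $\varphi$ absolutely continuous, satisfying $\varphi'(t)+\psi(t)\leq C_*\varphi(t)^3 + h(t)\varphi(t) + f(t)$ for $t\in(0,T]$ and $\varphi(0)=\varphi_0\geq 0$, where $h$ and $f$ are nonnegative continuous functions and $C_*\geq 0$. Let $T_1\in(0,T]$ satisfy $C_*\int_0^{T_1}\big(2\varphi_0+2\int_0^s f(\tau)\,d\tau\big)^2\,ds+\int_0^{T_1}h(s)\,ds\leq \tfrac12\ln(3/2)$. Then for all $t\in[0,T_1]$, $\varphi(t)+\int_0^t\psi(s)\,ds\leq 2\big(\varphi_0+\int_0^t f(s)\,ds\big)$. -/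

import Mathlib

open intervalIntegral Set

set_option maxHeartbeats 1000000 in
/-- Nonlinear Gronwall-type lemma (Lemma 3.2 in Lorca–Boldrini style). -/
theorem stmt_0 (T T₁ Cstar φ₀ : ℝ) (φ ψ h f φ' : ℝ → ℝ)
    (hT : 0 < T) (hT₁pos : 0 < T₁) (hT₁le : T₁ ≤ T)
    (hCstar : 0 ≤ Cstar) (hφ₀ : φ 0 = φ₀) (hφ₀nn : 0 ≤ φ₀)
    (hφnn : ∀ t ∈ Icc (0:ℝ) T, 0 ≤ φ t)
    (hψnn : ∀ t ∈ Icc (0:ℝ) T, 0 ≤ ψ t)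
    (hh : ContinuousOn h (Icc 0 T)) (hhnn : ∀ t ∈ Icc (0:ℝ) T, 0 ≤ h t)
    (hf : ContinuousOn f (Icc 0 T)) (hfnn : ∀ t ∈ Icc (0:ℝ) T, 0 ≤ f t)
    (hψint : ∀ t ∈ Icc (0:ℝ) T, IntervalIntegrable ψ MeasureTheory.volume 0 t)
    (hderiv : ∀ t ∈ Icc (0:ℝ) T, HasDerivAt φ (φ' t) t)
    (hineq : ∀ t ∈ Ioc (0:ℝ) T, φ' t + ψ t ≤ Cstar * (φ t)^3 + h t * φ t + f t)
    (hsmall : Cstar * (∫ s in (0:ℝ)..T₁, (2*φ₀ + 2 * ∫ τ in (0:ℝ)..s, f τ)^2)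
        + (∫ s in (0:ℝ)..T₁, h s) ≤ (1/2) * Real.log (3/2)) :
    ∀ t ∈ Icc (0:ℝ) T₁, φ t + (∫ s in (0:ℝ)..t, ψ s) ≤ 2 * (φ₀ + ∫ s in (0:ℝ)..t, f s) := by
  have h0T : (0:ℝ) ≤ T := hT.le
  have hsubT₁ : Icc (0:ℝ) T₁ ⊆ Icc 0 T := Icc_subset_Icc le_rfl hT₁le
  have hφc : ContinuousOn φ (Icc 0 T) := fun s hs =>
    ((hderiv s hs).continuousAt).continuousWithinAt
  set F : ℝ → ℝ := fun t => φ₀ + ∫ s in (0:ℝ)..t, f s with hFdef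
  set g : ℝ → ℝ := fun s => Cstar * (φ s)^3 + h s * φ s with hgdef
  clear_value F g
  -- continuity of auxiliary functions
  have hFc : ContinuousOn F (Icc 0 T) := by
    rw [hFdef]
    have : ContinuousOn (fun t => ∫ s in (0:ℝ)..t, f s) (Icc 0 T) := by
      have := intervalIntegral.continuousOn_primitive_interval
        (f := f) (a := 0) (b := T) (μ := MeasureTheory.volume)
        (by rw [uIcc_of_le h0T]; exact hf.integrableOn_Icc)
      rwa [uIcc_of_le h0T] at this
    exact continuousOn_const.add this
  have hgc : ContinuousOn g (Icc 0 T) := by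
    rw [hgdef]
    exact ((continuousOn_const.mul ((hφc.pow 3))).add (hh.mul hφc))
  -- interval integrability of continuous functions on subintervals
  have hci : ∀ (u : ℝ → ℝ), ContinuousOn u (Icc 0 T) → ∀ a b : ℝ, 0 ≤ a → a ≤ b → b ≤ T →
      IntervalIntegrable u MeasureTheory.volume a b := by
    intro u hu a b ha hab hbT
    apply ContinuousOn.intervalIntegrable
    rw [uIcc_of_le hab]
    exact hu.mono (Icc_subset_Icc ha hbT)
  -- monotonicity of primitives of nonnegative functions
  have hmono_int : ∀ (u : ℝ → ℝ), ContinuousOn u (Icc 0 T) → (∀ s ∈ Icc (0:ℝ) T, 0 ≤ u s) →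
      ∀ a b : ℝ, 0 ≤ a → a ≤ b → b ≤ T →
      (∫ s in (0:ℝ)..a, u s) ≤ ∫ s in (0:ℝ)..b, u s := by
    intro u hu hunn a b ha hab hbT
    have h1 : IntervalIntegrable u MeasureTheory.volume 0 a :=
      hci u hu 0 a le_rfl ha (hab.trans hbT)
    have h2 : IntervalIntegrable u MeasureTheory.volume a b := hci u hu a b ha hab hbT
    rw [← intervalIntegral.integral_add_adjacent_intervals h1 h2]
    have : 0 ≤ ∫ s in a..b, u s := by
      apply intervalIntegral.integral_nonneg hab
      intro s hs
      exact hunn s ⟨ha.trans hs.1, hs.2.trans hbT⟩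
    linarith
  -- nonnegativity and monotonicity of F
  have hFnn : ∀ t ∈ Icc (0:ℝ) T, 0 ≤ F t := by
    intro t ht
    have : 0 ≤ ∫ s in (0:ℝ)..t, f s :=
      intervalIntegral.integral_nonneg ht.1 fun s hs => hfnn s ⟨hs.1, hs.2.trans ht.2⟩
    simp only [hFdef]; linarith
  have hFmono : ∀ a b : ℝ, 0 ≤ a → a ≤ b → b ≤ T → F a ≤ F b := by
    intro a b ha hab hbT
    have := hmono_int f hf hfnn a b ha hab hbT
    simp only [hFdef]; linarith
  -- Step 1: integrated inequality
  have keyA : ∀ t ∈ Icc (0:ℝ) T, φ t + (∫ s in (0:ℝ)..t, ψ s) ≤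
      φ₀ + (∫ s in (0:ℝ)..t, g s) + ∫ s in (0:ℝ)..t, f s := by
    intro t ht
    have hIcc : Icc (0:ℝ) t ⊆ Icc 0 T := Icc_subset_Icc le_rfl ht.2
    have hψI : MeasureTheory.IntegrableOn ψ (Icc 0 t) MeasureTheory.volume := by
      rw [integrableOn_Icc_iff_integrableOn_Ioc]
      exact (hψint t ht).1
    have hgfI : MeasureTheory.IntegrableOn (fun s => g s + f s) (Icc 0 t)
        MeasureTheory.volume := ((hgc.mono hIcc).add (hf.mono hIcc)).integrableOn_Icc
    have h1 : φ t - φ 0 ≤ ∫ s in (0:ℝ)..t, (g s + f s - ψ s) := by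
      apply intervalIntegral.sub_le_integral_of_hasDeriv_right_of_le ht.1
        (hφc.mono hIcc)
        (fun x hx => (hderiv x ⟨hx.1.le, hx.2.le.trans ht.2⟩).hasDerivWithinAt)
        (hgfI.sub hψI)
      intro x hx
      have hx' : x ∈ Ioc (0:ℝ) T := ⟨hx.1, hx.2.le.trans ht.2⟩
      have := hineq x hx'
      simp only [hgdef, Pi.sub_apply]
      linarith
    have hgi : IntervalIntegrable g MeasureTheory.volume 0 t :=
      hci g hgc 0 t le_rfl ht.1 ht.2
    have hfi : IntervalIntegrable f MeasureTheory.volume 0 t :=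
      hci f hf 0 t le_rfl ht.1 ht.2
    have hψi : IntervalIntegrable ψ MeasureTheory.volume 0 t := hψint t ht
    rw [intervalIntegral.integral_sub (hgi.add hfi) hψi,
      intervalIntegral.integral_add hgi hfi] at h1
    rw [hφ₀] at h1
    linarith
  -- Step 2: the pointwise-to-integral estimate for g
  have est : ∀ ε : ℝ, 0 ≤ ε → ∀ t ∈ Icc (0:ℝ) T₁, (∀ s ∈ Icc (0:ℝ) t, φ s ≤ 2*(F s + ε)) →
      (∫ s in (0:ℝ)..t, g s) ≤
        2*(F t + ε) * (Cstar * (∫ s in (0:ℝ)..t, (2*(F s + ε))^2) + ∫ s in (0:ℝ)..t, h s) := by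
    intro ε hε t ht hbound
    have htT : t ≤ T := ht.2.trans hT₁le
    have hIcc : Icc (0:ℝ) t ⊆ Icc 0 T := Icc_subset_Icc le_rfl htT
    have hKc : ContinuousOn (fun s => (Cstar * (2*(F s + ε))^2 + h s) * (2*(F t + ε)))
        (Icc 0 T) := by
      apply ContinuousOn.mul _ continuousOn_const
      exact (continuousOn_const.mul (((continuousOn_const.mul
        (hFc.add continuousOn_const)).pow 2))).add hh
    have hpt : ∀ s ∈ Icc (0:ℝ) t, g s ≤
        (Cstar * (2*(F s + ε))^2 + h s) * (2*(F t + ε)) := by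
      intro s hs
      have hsT : s ∈ Icc (0:ℝ) T := hIcc hs
      have h1 : 0 ≤ φ s := hφnn s hsT
      have h2 : φ s ≤ 2*(F s + ε) := hbound s hs
      have h3 : F s ≤ F t := hFmono s t hs.1 hs.2 htT
      have h4 : 0 ≤ h s := hhnn s hsT
      have h5 : 0 ≤ F s := hFnn s hsT
      have hAB : 2*(F s + ε) ≤ 2*(F t + ε) := by linarith
      have hB : φ s ≤ 2*(F t + ε) := h2.trans hAB
      have hsq : φ s ^ 2 ≤ (2*(F s + ε))^2 := by nlinarith
      have e1 : 0 ≤ Cstar * ((2*(F s+ε))^2 - φ s ^2) * φ s :=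
        mul_nonneg (mul_nonneg hCstar (by linarith)) h1
      have e2 : 0 ≤ (Cstar * (2*(F s+ε))^2) * (2*(F t+ε) - φ s) :=
        mul_nonneg (mul_nonneg hCstar (sq_nonneg _)) (by linarith)
      have e3 : 0 ≤ h s * (2*(F t+ε) - φ s) := mul_nonneg h4 (by linarith)
      simp only [hgdef]
      nlinarith [e1, e2, e3]
    have hmono := intervalIntegral.integral_mono_on ht.1
      (hci g hgc 0 t le_rfl ht.1 htT)
      (hci _ hKc 0 t le_rfl ht.1 htT) hpt
    have hsplit : (∫ s in (0:ℝ)..t, (Cstar * (2*(F s + ε))^2 + h s) * (2*(F t + ε)))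
        = (Cstar * (∫ s in (0:ℝ)..t, (2*(F s + ε))^2) + ∫ s in (0:ℝ)..t, h s)
          * (2*(F t + ε)) := by
      rw [intervalIntegral.integral_mul_const, intervalIntegral.integral_add
        (hci (fun s => Cstar * (2*(F s + ε))^2) (continuousOn_const.mul (((continuousOn_const.mul
          (hFc.add continuousOn_const)).pow 2))) 0 t le_rfl ht.1 htT)
        (hci h hh 0 t le_rfl ht.1 htT),
        intervalIntegral.integral_const_mul]
    rw [hsplit] at hmono
    linarith [hmono, mul_comm (Cstar * (∫ s in (0:ℝ)..t, (2*(F s + ε))^2)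
      + ∫ s in (0:ℝ)..t, h s) (2*(F t + ε))]
  -- rewrite hsmall in terms of F
  have hsmallF : Cstar * (∫ s in (0:ℝ)..T₁, (2 * F s)^2) + (∫ s in (0:ℝ)..T₁, h s)
      ≤ (1/2) * Real.log (3/2) := by
    have : (∫ s in (0:ℝ)..T₁, (2 * F s)^2)
        = ∫ s in (0:ℝ)..T₁, (2*φ₀ + 2 * ∫ τ in (0:ℝ)..s, f τ)^2 := by
      apply intervalIntegral.integral_congr
      intro s _
      simp only [hFdef]
      ring
    rw [this]
    exact hsmall
  have hlog : Real.log (3/2) ≤ 1/2 := by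
    have := Real.log_le_sub_one_of_pos (by norm_num : (0:ℝ) < 3/2)
    linarith
  -- choose the perturbation size
  set M : ℝ := Cstar * (8 * (∫ s in (0:ℝ)..T₁, F s) + 4 * T₁) with hMdef
  clear_value M
  have hintFnn : 0 ≤ ∫ s in (0:ℝ)..T₁, F s :=
    intervalIntegral.integral_nonneg hT₁pos.le fun s hs => hFnn s (hsubT₁ hs)
  have hMnn : 0 ≤ M := by
    rw [hMdef]
    apply mul_nonneg hCstar
    nlinarith
  set ε₀ : ℝ := min 1 ((1/8) / (M + 1)) with hε₀def
  clear_value ε₀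
  have hε₀pos : 0 < ε₀ := by
    rw [hε₀def]
    exact lt_min one_pos (div_pos (by norm_num) (by linarith))
  -- coefficient smallness for perturbed F
  have hcoef : ∀ ε : ℝ, 0 < ε → ε ≤ ε₀ → ∀ t ∈ Icc (0:ℝ) T₁,
      Cstar * (∫ s in (0:ℝ)..t, (2*(F s + ε))^2) + (∫ s in (0:ℝ)..t, h s) ≤ 3/8 := by
    intro ε hεpos hεle t ht
    have hKsq : ContinuousOn (fun s => (2*(F s + ε))^2) (Icc 0 T) :=
      (continuousOn_const.mul (hFc.add continuousOn_const)).pow 2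
    have hKnn : ∀ s ∈ Icc (0:ℝ) T, 0 ≤ (2*(F s + ε))^2 := fun s _ => sq_nonneg _
    have m1 : (∫ s in (0:ℝ)..t, (2*(F s + ε))^2) ≤ ∫ s in (0:ℝ)..T₁, (2*(F s + ε))^2 :=
      hmono_int _ hKsq hKnn t T₁ ht.1 ht.2 hT₁le
    have m2 : (∫ s in (0:ℝ)..t, h s) ≤ ∫ s in (0:ℝ)..T₁, h s :=
      hmono_int h hh hhnn t T₁ ht.1 ht.2 hT₁le
    have hsplit : (∫ s in (0:ℝ)..T₁, (2*(F s + ε))^2)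
        = (∫ s in (0:ℝ)..T₁, (2 * F s)^2) + (ε * (8 * (∫ s in (0:ℝ)..T₁, F s) + 4 * ε * T₁)) := by
      have e1 : (∫ s in (0:ℝ)..T₁, (2*(F s + ε))^2)
          = ∫ s in (0:ℝ)..T₁, ((2 * F s)^2 + (ε * (8 * F s) + 4 * ε^2)) := by
        apply intervalIntegral.integral_congr
        intro s _
        ring
      have i1 : IntervalIntegrable (fun s => (2 * F s)^2) MeasureTheory.volume 0 T₁ :=
        hci _ ((continuousOn_const.mul hFc).pow 2) 0 T₁ le_rfl hT₁pos.le hT₁le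
      have i2 : IntervalIntegrable (fun s => ε * (8 * F s)) MeasureTheory.volume 0 T₁ :=
        hci _ (continuousOn_const.mul (continuousOn_const.mul hFc)) 0 T₁ le_rfl hT₁pos.le hT₁le
      have i3 : IntervalIntegrable (fun _ : ℝ => 4 * ε^2) MeasureTheory.volume 0 T₁ :=
        intervalIntegrable_const
      rw [e1, intervalIntegral.integral_add i1 (i2.add i3), intervalIntegral.integral_add i2 i3,
        intervalIntegral.integral_const, intervalIntegral.integral_const_mul,
        intervalIntegral.integral_const_mul, smul_eq_mul, sub_zero]
      ring
    have hεM : ε * M ≤ 1/8 := by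
      have h1 : ε ≤ (1/8)/(M+1) := hεle.trans (hε₀def ▸ min_le_right 1 ((1/8)/(M+1)))
      rw [le_div_iff₀ (by linarith : (0:ℝ) < M + 1)] at h1
      nlinarith
    have hε1 : ε ≤ 1 := hεle.trans (hε₀def ▸ min_le_left 1 ((1/8)/(M+1)))
    have hextra : Cstar * (ε * (8 * (∫ s in (0:ℝ)..T₁, F s) + 4 * ε * T₁)) ≤ ε * M := by
      simp only [hMdef]
      have : 4 * ε * T₁ ≤ 4 * T₁ := by nlinarith
      have hb : 8 * (∫ s in (0:ℝ)..T₁, F s) + 4 * ε * T₁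
          ≤ 8 * (∫ s in (0:ℝ)..T₁, F s) + 4 * T₁ := by linarith
      calc Cstar * (ε * (8 * (∫ s in (0:ℝ)..T₁, F s) + 4 * ε * T₁))
          ≤ Cstar * (ε * (8 * (∫ s in (0:ℝ)..T₁, F s) + 4 * T₁)) := by
            apply mul_le_mul_of_nonneg_left _ hCstar
            apply mul_le_mul_of_nonneg_left hb hεpos.le
        _ = ε * (Cstar * (8 * (∫ s in (0:ℝ)..T₁, F s) + 4 * T₁)) := by ring
    have hC1 : Cstar * (∫ s in (0:ℝ)..t, (2*(F s + ε))^2) ≤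
        Cstar * (∫ s in (0:ℝ)..T₁, (2*(F s + ε))^2) :=
      mul_le_mul_of_nonneg_left m1 hCstar
    rw [hsplit, mul_add] at hC1
    linarith
  -- bootstrap for fixed ε
  have boot : ∀ ε : ℝ, 0 < ε → ε ≤ ε₀ → ∀ t ∈ Icc (0:ℝ) T₁, φ t ≤ 2*(F t + ε) := by
    intro ε hεpos hεle
    have step : ∀ t ∈ Icc (0:ℝ) T₁, (∀ s ∈ Icc (0:ℝ) t, φ s ≤ 2*(F s + ε)) →
        φ t ≤ (7/4)*(F t + ε) := by
      intro t ht hb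
      have h1 := keyA t (hsubT₁ ht)
      have h2 := est ε hεpos.le t ht hb
      have h3 := hcoef ε hεpos hεle t ht
      have hψpos : 0 ≤ ∫ s in (0:ℝ)..t, ψ s :=
        intervalIntegral.integral_nonneg ht.1 fun s hs =>
          hψnn s ⟨hs.1, hs.2.trans (ht.2.trans hT₁le)⟩
      have hFt : 0 ≤ F t := hFnn t (hsubT₁ ht)
      have h4 : (∫ s in (0:ℝ)..t, g s) ≤ 2*(F t + ε) * (3/8) := by
        calc (∫ s in (0:ℝ)..t, g s)
            ≤ 2*(F t + ε) * (Cstar * (∫ s in (0:ℝ)..t, (2*(F s + ε))^2)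
              + ∫ s in (0:ℝ)..t, h s) := h2
          _ ≤ 2*(F t + ε) * (3/8) := by
              apply mul_le_mul_of_nonneg_left h3
              linarith
      have hFeq : F t = φ₀ + ∫ s in (0:ℝ)..t, f s := by simp only [hFdef]
      linarith
    set A : Set ℝ := {t | t ∈ Icc (0:ℝ) T₁ ∧ ∀ s ∈ Icc (0:ℝ) t, φ s ≤ 2*(F s + ε)} with hAdef
    have h0A : (0:ℝ) ∈ A := by
      constructor
      · exact ⟨le_rfl, hT₁pos.le⟩
      · intro s hs
        have : s = 0 := le_antisymm hs.2 hs.1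
        subst this
        have : F 0 = φ₀ := by simp [hFdef]
        rw [hφ₀, this]
        linarith
    have hAne : A.Nonempty := ⟨0, h0A⟩
    have hAbdd : BddAbove A := ⟨T₁, fun x hx => hx.1.2⟩
    set c : ℝ := sSup A with hcdef
    clear_value c
    have hc0 : 0 ≤ c := hcdef ▸ le_csSup hAbdd h0A
    have hcT₁ : c ≤ T₁ := hcdef ▸ csSup_le hAne fun x hx => hx.1.2
    -- the closed sub-level set
    have hA' : IsClosed {t : ℝ | t ∈ Icc (0:ℝ) T₁ ∧ φ t - 2*(F t + ε) ≤ 0} := by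
      have hu : ContinuousOn (fun t => φ t - 2*(F t + ε)) (Icc 0 T₁) :=
        ((hφc.mono hsubT₁).sub (continuousOn_const.mul ((hFc.mono hsubT₁).add
          continuousOn_const)))
      have := hu.preimage_isClosed_of_isClosed isClosed_Icc (isClosed_Iic (a := (0:ℝ)))
      convert this using 1
      rfl
    have hcA : c ∈ A := by
      have hcmem : c ∈ Icc (0:ℝ) T₁ := ⟨hc0, hcT₁⟩
      refine ⟨hcmem, ?_⟩
      intro s hs
      rcases eq_or_lt_of_le hs.2 with heq | hlt
      · -- s = c : use closedness
        have hsub : A ⊆ {t : ℝ | t ∈ Icc (0:ℝ) T₁ ∧ φ t - 2*(F t + ε) ≤ 0} := by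
          intro x hx
          exact ⟨hx.1, by linarith [hx.2 x ⟨hx.1.1, le_rfl⟩]⟩
        have : c ∈ {t : ℝ | t ∈ Icc (0:ℝ) T₁ ∧ φ t - 2*(F t + ε) ≤ 0} :=
          hA'.closure_subset ((closure_mono hsub) (hcdef ▸ csSup_mem_closure hAne hAbdd))
        rw [heq]
        linarith [this.2]
      · obtain ⟨a, haA, hsa⟩ := exists_lt_of_lt_csSup hAne (hcdef ▸ hlt)
        exact haA.2 s ⟨hs.1, hsa.le⟩
    have hcT₁' : c = T₁ := by
      by_contra hne
      have hclt : c < T₁ := lt_of_le_of_ne hcT₁ hne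
      have hstep := step c ⟨hc0, hcT₁⟩ hcA.2
      have hFc0 : 0 ≤ F c := hFnn c (hsubT₁ ⟨hc0, hcT₁⟩)
      have hstrict : φ c - 2*(F c + ε) < 0 := by nlinarith [hεpos, hFc0, hstep]
      -- continuity gives a neighborhood where φ < 2(F+ε)
      have hu : ContinuousWithinAt (fun t => φ t - 2*(F t + ε)) (Icc 0 T) c :=
        ((hφc.sub (continuousOn_const.mul (hFc.add continuousOn_const)))) c
          (hsubT₁ ⟨hc0, hcT₁⟩)
      have hnhds : {t : ℝ | φ t - 2*(F t + ε) < 0} ∈ nhdsWithin c (Icc 0 T) :=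
        hu (Iio_mem_nhds hstrict)
      rw [Metric.mem_nhdsWithin_iff] at hnhds
      obtain ⟨δ, hδpos, hδsub⟩ := hnhds
      set t' : ℝ := min T₁ (c + δ/2) with ht'def
      clear_value t'
      have hct' : c < t' := ht'def ▸ lt_min hclt (by linarith)
      have ht'T₁ : t' ≤ T₁ := ht'def ▸ min_le_left T₁ (c + δ/2)
      have ht'A : t' ∈ A := by
        refine ⟨⟨hc0.trans hct'.le, ht'T₁⟩, ?_⟩
        intro s hs
        rcases le_or_gt s c with hsc | hsc
        · exact hcA.2 s ⟨hs.1, hsc⟩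
        · have hsδ : |s - c| < δ := by
            rw [abs_sub_lt_iff]
            constructor
            · have : s ≤ c + δ/2 := hs.2.trans (ht'def ▸ min_le_right T₁ (c + δ/2))
              linarith
            · linarith
          have hsT : s ∈ Icc (0:ℝ) T := ⟨hs.1, (hs.2.trans ht'T₁).trans hT₁le⟩
          have : s ∈ Metric.ball c δ ∩ Icc 0 T := ⟨by simpa [Metric.mem_ball, Real.dist_eq], hsT⟩
          have := hδsub this
          simp only [Set.mem_setOf_eq] at this
          linarith
      have : t' ≤ c := hcdef ▸ le_csSup hAbdd ht'A
      linarith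
    intro t ht
    apply hcA.2 t
    rw [hcT₁']
    exact ht
  -- pass to the limit ε → 0
  have hφ2F : ∀ s ∈ Icc (0:ℝ) T₁, φ s ≤ 2 * F s := by
    intro s hs
    apply le_of_forall_pos_le_add
    intro δ hδ
    set ε : ℝ := min ε₀ (δ/2) with hεdef
    clear_value ε
    have hεpos : 0 < ε := hεdef ▸ lt_min hε₀pos (by linarith)
    have := boot ε hεpos (hεdef ▸ min_le_left ε₀ (δ/2)) s hs
    have hεδ : ε ≤ δ/2 := hεdef ▸ min_le_right ε₀ (δ/2)
    linarith
  -- conclusion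
  intro t ht
  have h1 := keyA t (hsubT₁ ht)
  have hb : ∀ s ∈ Icc (0:ℝ) t, φ s ≤ 2*(F s + 0) := by
    intro s hs
    have := hφ2F s ⟨hs.1, hs.2.trans ht.2⟩
    linarith
  have h2 := est 0 le_rfl t ht hb
  have h3 : Cstar * (∫ s in (0:ℝ)..t, (2*(F s + 0))^2) + (∫ s in (0:ℝ)..t, h s)
      ≤ (1/2) * Real.log (3/2) := by
    have hKsq : ContinuousOn (fun s => (2*(F s + 0))^2) (Icc 0 T) :=
      (continuousOn_const.mul (hFc.add continuousOn_const)).pow 2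
    have m1 : (∫ s in (0:ℝ)..t, (2*(F s + 0))^2) ≤ ∫ s in (0:ℝ)..T₁, (2*(F s + 0))^2 :=
      hmono_int _ hKsq (fun s _ => sq_nonneg _) t T₁ ht.1 ht.2 hT₁le
    have m2 : (∫ s in (0:ℝ)..t, h s) ≤ ∫ s in (0:ℝ)..T₁, h s :=
      hmono_int h hh hhnn t T₁ ht.1 ht.2 hT₁le
    have e0 : (∫ s in (0:ℝ)..T₁, (2*(F s + 0))^2) = ∫ s in (0:ℝ)..T₁, (2 * F s)^2 := by
      apply intervalIntegral.integral_congr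
      intro s _
      ring
    have := mul_le_mul_of_nonneg_left m1 hCstar
    rw [e0] at this
    linarith
  have hFt : 0 ≤ F t := hFnn t (hsubT₁ ht)
  have hlognn : 0 ≤ Real.log (3/2) := Real.log_nonneg (by norm_num)
  have h4 : (∫ s in (0:ℝ)..t, g s) ≤ 2*(F t + 0) * ((1/2) * Real.log (3/2)) := by
    calc (∫ s in (0:ℝ)..t, g s)
        ≤ 2*(F t + 0) * (Cstar * (∫ s in (0:ℝ)..t, (2*(F s + 0))^2)
            + ∫ s in (0:ℝ)..t, h s) := h2
      _ ≤ 2*(F t + 0) * ((1/2) * Real.log (3/2)) := by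
          apply mul_le_mul_of_nonneg_left h3
          linarith
  have h5 : 2*(F t + 0) * ((1/2) * Real.log (3/2)) ≤ F t := by
    have : F t * Real.log (3/2) ≤ F t * (1/2) := mul_le_mul_of_nonneg_left hlog hFt
    nlinarith
  have hFeq : F t = φ₀ + ∫ s in (0:ℝ)..t, f s := by simp only [hFdef]
  linarith
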